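/- Let F be a finite field of order q^m, λ a nontrivial additive character of F, and g ∈ F_q[x] a divisor of x^m − 1 of degree k acting on F by g ∘ β = Σ aᵢβ^{qⁱ}. For additive characters λ, Ω of F, define g ∘ Ω by (g ∘ Ω)(β) = Ω(g ∘ β). Then (1/q^m) Σ_{β ∈ F} λ(β) Ω(g ∘ β)^{−1} equals 1 if λ = g ∘ Ω and 0 otherwise. Moreover, for a fixed additive character λ, the set {Ω : λ = g ∘ Ω} has exactly q^k elements if Ord_q(λ) divides (x^m − 1)/g, and is empty otherwise. -/
import Mathlib


open scoped Classical

/-- The linearized action of a polynomial `f = Σ aᵢ xⁱ` over `F_q` on `ξ ∈ F_{q^m}`: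
`f ∘ ξ = Σ aᵢ ξ^{qⁱ}`. -/
noncomputable def polyAct {Fq F : Type} [Field Fq] [Field F] [Algebra Fq F]
    (q : ℕ) (f : Polynomial Fq) (ξ : F) : F :=
  f.sum fun i a => algebraMap Fq F a * ξ ^ q ^ i


private theorem exists_L (p s q : ℕ) (hp : p.Prime) (hs : 0 < s) (hq : q = p ^ s)
    (Fq F : Type) [Field Fq] [Field F] [Fintype Fq] [Algebra Fq F]
    (hcardq : Fintype.card Fq = q) :
    ∃ L : Polynomial Fq →ₐ[Fq] Module.End Fq F,
      (∀ f (ξ : F), L f ξ = polyAct q f ξ) ∧ (∀ ξ : F, L Polynomial.X ξ = ξ ^ q) := by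
  haveI : Fact p.Prime := ⟨hp⟩
  haveI hPq : CharP Fq p := by
    obtain ⟨n, hr, hcard⟩ := FiniteField.card Fq (ringChar Fq)
    have hdvd : ringChar Fq ∣ p ^ s := by
      rw [← hq, ← hcardq, hcard]
      exact dvd_pow_self _ (by positivity)
    have : ringChar Fq = p := by
      have := hr.dvd_of_dvd_pow hdvd
      exact ((Nat.prime_dvd_prime_iff_eq hr hp).mp this)
    exact this ▸ ringChar.charP Fq
  haveI : CharP F p := charP_of_injective_algebraMap (algebraMap Fq F).injective p
  have hfix : ∀ a : Fq, a ^ q = a := fun a => by rw [← hcardq]; exact FiniteField.pow_card a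
  have hadd : ∀ x y : F, (x + y) ^ q = x ^ q + y ^ q := fun x y => by
    rw [hq]; exact add_pow_char_pow x y p s
  set frq : F →ₗ[Fq] F :=
    { toFun := fun x => x ^ q
      map_add' := hadd
      map_smul' := fun a x => by
        simp only [Algebra.smul_def, mul_pow, RingHom.id_apply]
        rw [← map_pow, hfix] } with hfrq
  have hpow : ∀ (n : ℕ) (ξ : F), (frq ^ n) ξ = ξ ^ q ^ n := by
    intro n
    induction n with
    | zero => intro ξ; simp
    | succ n ih =>
      intro ξ
      rw [pow_succ', Module.End.mul_apply, ih, hfrq]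
      simp only [LinearMap.coe_mk, AddHom.coe_mk]
      rw [← pow_mul, pow_succ', Nat.mul_comm]
  refine ⟨Polynomial.aeval frq, fun f ξ => ?_, fun ξ => by simp [hfrq]⟩
  rw [Polynomial.aeval_def, Polynomial.eval₂_eq_sum, polyAct, Polynomial.sum_def,
    Polynomial.sum_def]
  rw [LinearMap.coe_sum, Finset.sum_apply]
  refine Finset.sum_congr rfl fun i _ => ?_
  rw [Module.End.mul_apply, Module.algebraMap_end_apply, Algebra.smul_def]
  rw [hpow]
private theorem ker_card_le (q : ℕ) (hq2 : 2 ≤ q)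
    (Fq F : Type) [Field Fq] [Field F] [Fintype F] [Algebra Fq F]
    (f : Polynomial Fq) (hf : f ≠ 0) :
    Nat.card {β : F // polyAct q f β = 0} ≤ q ^ f.natDegree := by
  set d := f.natDegree with hd
  set P : Polynomial F :=
    ∑ i ∈ f.support, Polynomial.C (algebraMap Fq F (f.coeff i)) * Polynomial.X ^ q ^ i with hP
  have heval : ∀ β : F, P.eval β = polyAct q f β := by
    intro β
    rw [hP, Polynomial.eval_finset_sum, polyAct, Polynomial.sum_def]
    simp
  have hcoeff : P.coeff (q ^ d) = algebraMap Fq F (f.coeff d) := by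
    rw [hP, Polynomial.finset_sum_coeff]
    rw [Finset.sum_eq_single d]
    · simp [Polynomial.coeff_C_mul, Polynomial.coeff_X_pow]
    · intro i hi hne
      have : q ^ d ≠ q ^ i := fun h => hne ((Nat.pow_right_injective hq2 h).symm)
      simp only [Polynomial.coeff_C_mul, Polynomial.coeff_X_pow, if_neg this, mul_zero]
    · intro h
      exact absurd (Polynomial.natDegree_mem_support_of_nonzero hf) h
  have hPne : P ≠ 0 := by
    intro h
    rw [h, Polynomial.coeff_zero] at hcoeff
    exact (Polynomial.leadingCoeff_ne_zero.mpr hf)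
      ((map_eq_zero (algebraMap Fq F)).mp hcoeff.symm)
  have hdeg : P.natDegree ≤ q ^ d := by
    refine Polynomial.natDegree_sum_le_of_forall_le _ _ fun i hi => ?_
    refine (Polynomial.natDegree_mul_le).trans ?_
    simp only [Polynomial.natDegree_C, Polynomial.natDegree_X_pow, zero_add]
    exact Nat.pow_le_pow_right (by omega) (Polynomial.le_natDegree_of_mem_supp i hi)
  rw [Nat.card_eq_fintype_card, Fintype.card_subtype]
  calc (Finset.univ.filter fun β : F => polyAct q f β = 0).card
      ≤ P.roots.toFinset.card := by
        apply Finset.card_le_card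
        intro β hβ
        rw [Finset.mem_filter] at hβ
        rw [Multiset.mem_toFinset, Polynomial.mem_roots hPne, Polynomial.IsRoot, heval]
        exact hβ.2
    _ ≤ Multiset.card P.roots := Multiset.toFinset_card_le _
    _ ≤ P.natDegree := Polynomial.card_roots' P
    _ ≤ q ^ d := hdeg
/-- for additive characters `λ, Ω` of `F = F_{q^m}` (with `λ` nontrivial)
and `g ∣ x^m - 1` of degree `k`: `(1/q^m)·Σ_β λ(β)·Ω(g∘β)⁻¹` is `1` if `λ = g ∘ Ω` and
`0` otherwise; and the number of `Ω` with `λ = g ∘ Ω` is `q^k` if `Ord_q(λ)` divides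
`(x^m - 1)/g` (i.e. `λ ∘ ((x^m-1)/g)` is trivial) and `0` otherwise. -/
theorem stmt_19 (p s q m k : ℕ) (hp : p.Prime) (hs : 0 < s) (hq : q = p ^ s)
    (hm : 0 < m)
    (Fq F : Type) [Field Fq] [Field F] [Fintype Fq] [Fintype F] [Algebra Fq F]
    (hcardq : Fintype.card Fq = q) (hcardF : Fintype.card F = q ^ m)
    (g g' : Polynomial Fq) (hgdeg : g.natDegree = k)
    (hfactor : g * g' = Polynomial.X ^ m - 1)
    (lam Om : AddChar F ℂ) (hlam : lam ≠ 1) :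
    ((∑ β : F, lam β * (Om (polyAct q g β))⁻¹) =
      if ∀ β : F, lam β = Om (polyAct q g β) then ((q : ℂ) ^ m) else 0) ∧
    (Nat.card {Om' : AddChar F ℂ // ∀ β : F, lam β = Om' (polyAct q g β)} =
      if ∀ β : F, lam (polyAct q g' β) = 1 then q ^ k else 0) := by
  haveI : Fact p.Prime := ⟨hp⟩
  have hq2 : 2 ≤ q := by
    rw [hq]
    calc 2 ≤ p := hp.two_le
    _ ≤ p ^ s := Nat.le_self_pow (by omega) p
  obtain ⟨L, hL, hLX⟩ := exists_L p s q hp hs hq Fq F hcardq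
  -- rewrite the goal in terms of L
  simp only [← hL]
  set Lg : Module.End Fq F := L g with hLg
  set Lg' : Module.End Fq F := L g' with hLg'
  -- degree bookkeeping
  have hXmdeg : (Polynomial.X ^ m - 1 : Polynomial Fq).natDegree = m := by
    simpa using (Polynomial.natDegree_X_pow_sub_C (n := m) (r := (1 : Fq)))
  have hXm : (Polynomial.X ^ m - 1 : Polynomial Fq) ≠ 0 := by
    intro h
    rw [h, Polynomial.natDegree_zero] at hXmdeg
    omega
  have hg0 : g ≠ 0 := fun h => hXm (by rw [← hfactor, h, zero_mul])
  have hg'0 : g' ≠ 0 := fun h => hXm (by rw [← hfactor, h, mul_zero])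
  have hdegsum : g.natDegree + g'.natDegree = m := by
    rw [← Polynomial.natDegree_mul hg0 hg'0, hfactor, hXmdeg]
  have hkm : k ≤ m := by omega
  have hg'deg : g'.natDegree = m - k := by omega
  -- the key algebraic identities
  have hpowX : ∀ (n : ℕ) (ξ : F), ((L Polynomial.X) ^ n) ξ = ξ ^ q ^ n := by
    intro n
    induction n with
    | zero => intro ξ; simp
    | succ n ih =>
      intro ξ
      rw [pow_succ, Module.End.mul_apply, hLX, ih, ← pow_mul, pow_succ, Nat.mul_comm]
  have hnull : ∀ ξ : F, L (Polynomial.X ^ m - 1) ξ = 0 := by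
    intro ξ
    rw [map_sub, map_pow, map_one, LinearMap.sub_apply, Module.End.one_apply, hpowX,
      ← hcardF, FiniteField.pow_card, sub_self]
  have hcomp : ∀ ξ : F, Lg (Lg' ξ) = 0 := by
    intro ξ
    have h := hnull ξ
    rw [← hfactor, map_mul, Module.End.mul_apply] at h
    exact h
  -- cardinality of kernels and ranges
  set a := Nat.card {β : F // Lg β = 0} with ha_def
  set b := Nat.card {β : F // Lg' β = 0} with hb_def
  have hale : a ≤ q ^ k := by
    rw [ha_def, Nat.card_congr (Equiv.subtypeEquivRight fun β => by rw [hL])]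
    rw [← hgdeg]
    exact ker_card_le q hq2 Fq F g hg0
  have hble : b ≤ q ^ (m - k) := by
    rw [hb_def, Nat.card_congr (Equiv.subtypeEquivRight fun β => by rw [hL])]
    rw [← hg'deg]
    exact ker_card_le q hq2 Fq F g' hg'0
  set φ : F →+ F := Lg'.toAddMonoidHom with hφ
  set r := Nat.card φ.range with hr_def
  have hqm : q ^ m = r * b := by
    have e1 : Nat.card (F ⧸ φ.ker) = r :=
      Nat.card_congr (QuotientAddGroup.quotientKerEquivRange φ).toEquiv
    have e2 : Nat.card φ.ker = b :=
      Nat.card_congr (Equiv.subtypeEquivRight fun β => φ.mem_ker)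
    rw [← hcardF, ← Nat.card_eq_fintype_card,
      AddSubgroup.card_eq_card_quotient_mul_card_addSubgroup φ.ker, e1, e2]
  -- the range of Lg' is contained in the kernel of Lg
  set setR : Set F := Set.range Lg' with hsetR
  set setK : Set F := {β : F | Lg β = 0} with hsetK
  have hsub : setR ⊆ setK := by
    rintro x ⟨γ, rfl⟩
    exact hcomp γ
  have hrR : r = setR.ncard := by
    rw [hr_def, ← Nat.card_coe_set_eq]
    exact Nat.card_congr (Equiv.setCongr (by rw [hsetR]; exact φ.coe_range))
  have haK : a = setK.ncard := by
    rw [ha_def, ← Nat.card_coe_set_eq]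
    exact Nat.card_congr (Equiv.subtypeEquivRight fun β => Iff.rfl)
  have hra : r ≤ a := by
    rw [hrR, haK]
    exact Set.ncard_le_ncard hsub (Set.toFinite _)
  have hb0 : 0 < b := by
    have : Nonempty {β : F // Lg' β = 0} := ⟨⟨0, map_zero _⟩⟩
    rw [hb_def]
    exact Nat.card_pos
  have hpowmk : q ^ k * q ^ (m - k) = q ^ m := by
    rw [← pow_add]
    congr 1
    omega
  have h1 : r * b ≤ a * b := Nat.mul_le_mul_right b hra
  have h2 : a * b ≤ q ^ k * b := Nat.mul_le_mul_right b hale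
  have h3 : q ^ k * b ≤ q ^ k * q ^ (m - k) := Nat.mul_le_mul_left _ hble
  have hrb : r * b = q ^ m := hqm.symm
  have hab : a * b = q ^ k * b :=
    le_antisymm h2 (by
      calc q ^ k * b ≤ q ^ k * q ^ (m - k) := h3
      _ = q ^ m := hpowmk
      _ = r * b := hqm
      _ ≤ a * b := h1)
  have haqk : a = q ^ k := Nat.eq_of_mul_eq_mul_right hb0 hab
  have hreqa : r = a :=
    Nat.eq_of_mul_eq_mul_right hb0
      (le_antisymm h1 (by
        calc a * b = q ^ k * b := hab
        _ ≤ q ^ k * q ^ (m - k) := h3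
        _ = q ^ m := hpowmk
        _ = r * b := hqm))
  have hseteq : setR = setK :=
    Set.eq_of_subset_of_ncard_le hsub (by rw [← haK, ← hrR, hreqa]) (Set.toFinite _)
  -- translate membership
  have hiff : (∀ β : F, lam (Lg' β) = 1) ↔ (∀ x : F, Lg x = 0 → lam x = 1) := by
    constructor
    · intro h x hx
      have hmem : x ∈ setR := by rw [hseteq]; exact hx
      obtain ⟨γ, rfl⟩ := hmem
      exact h γ
    · intro h β
      exact h _ (hcomp β)
  -- part 1 (for arbitrary Ω)
  have hcast : ((Fintype.card F : ℂ)) = (q : ℂ) ^ m := by rw [hcardF]; push_cast; ring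
  have part1 : ∀ Om' : AddChar F ℂ,
      (∑ β : F, lam β * (Om' (Lg β))⁻¹) =
        if (∀ β : F, lam β = Om' (Lg β)) then ((q : ℂ) ^ m) else 0 := by
    intro Om'
    set ψ : AddChar F ℂ := Om'.compAddMonoidHom Lg.toAddMonoidHom with hψ
    have hterm : ∀ β : F, lam β * (Om' (Lg β))⁻¹ = (lam * ψ⁻¹) β := by
      intro β
      rw [AddChar.mul_apply, AddChar.inv_apply']
      rfl
    rw [Finset.sum_congr rfl fun β _ => hterm β, AddChar.sum_eq_ite]
    have hcond : (lam * ψ⁻¹ = 0) ↔ (∀ β : F, lam β = Om' (Lg β)) := by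
      rw [show (0 : AddChar F ℂ) = 1 from rfl, mul_inv_eq_one]
      exact DFunLike.ext_iff
    by_cases hc : ∀ β : F, lam β = Om' (Lg β)
    · rw [if_pos (hcond.mpr hc), if_pos hc, hcast]
    · rw [if_neg (fun h => hc (hcond.mp h)), if_neg hc]
  -- sum over all characters at a point
  have hsum2 : ∀ γ : F, (∑ Om' : AddChar F ℂ, (Om' γ)⁻¹) =
      if γ = 0 then ((q : ℂ) ^ m) else 0 := by
    intro γ
    have : ∀ Om' : AddChar F ℂ, (Om' γ)⁻¹ = Om' (-γ) := fun Om' =>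
      (AddChar.map_neg_eq_inv Om' γ).symm
    rw [Finset.sum_congr rfl fun Om' _ => this Om', AddChar.sum_apply_eq_ite, neg_eq_zero]
    by_cases hγ : γ = 0
    · rw [if_pos hγ, if_pos hγ, hcast]
    · rw [if_neg hγ, if_neg hγ]
  -- kernel submodule and character sum over it
  set KM : Submodule Fq F := LinearMap.ker Lg with hKM
  have hKMmem : ∀ x : F, x ∈ KM ↔ Lg x = 0 := fun x => LinearMap.mem_ker
  have hKMcard : Nat.card KM = q ^ k := by
    rw [← haqk, ha_def]
    exact Nat.card_congr (Equiv.subtypeEquivRight fun β => hKMmem β)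
  have hψKsum : (∑ x : KM, lam (x : F)) =
      if (∀ x : F, Lg x = 0 → lam x = 1) then ((q : ℂ) ^ k) else 0 := by
    set ψK : AddChar KM ℂ := lam.compAddMonoidHom (KM.subtype.toAddMonoidHom) with hψK
    have : (∑ x : KM, lam (x : F)) = ∑ x : KM, ψK x := rfl
    rw [this, AddChar.sum_eq_ite]
    have hcond : (ψK = 0) ↔ (∀ x : F, Lg x = 0 → lam x = 1) := by
      rw [show (0 : AddChar KM ℂ) = 1 from rfl, AddChar.eq_one_iff]
      constructor
      · intro h x hx
        exact h ⟨x, (hKMmem x).mpr hx⟩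
      · intro h x
        exact h x ((hKMmem x).mp x.2)
    have hcardKM : ((Fintype.card KM : ℂ)) = (q : ℂ) ^ k := by
      rw [← Nat.card_eq_fintype_card, hKMcard]; push_cast; ring
    by_cases hc : ∀ x : F, Lg x = 0 → lam x = 1
    · rw [if_pos (hcond.mpr hc), if_pos hc, hcardKM]
    · rw [if_neg (fun h => hc (hcond.mp h)), if_neg hc]
  -- collapse indicator sum over F to sum over KM
  have hcollapse : (∑ β : F, (if Lg β = 0 then lam β else 0)) = ∑ x : KM, lam (x : F) := by
    rw [← Finset.sum_filter]
    exact Finset.sum_subtype _ (fun x => by simp [hKMmem]) _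
  -- the double counting
  set P : AddChar F ℂ → Prop := fun Om' => ∀ β : F, lam β = Om' (Lg β) with hP
  set N := (Finset.univ.filter P).card with hN
  have hNcard : Nat.card {Om' : AddChar F ℂ // ∀ β : F, lam β = Om' (Lg β)} = N := by
    rw [Nat.card_eq_fintype_card, hN]
    exact Fintype.card_subtype _
  have key : (N : ℂ) * ((q : ℂ) ^ m) = ((q : ℂ) ^ m) * (∑ x : KM, lam (x : F)) := by
    have lhs : (∑ Om' : AddChar F ℂ, ∑ β : F, lam β * (Om' (Lg β))⁻¹) =
        (N : ℂ) * ((q : ℂ) ^ m) := by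
      rw [Finset.sum_congr rfl fun Om' _ => part1 Om']
      rw [Finset.sum_ite, Finset.sum_const, Finset.sum_const_zero, add_zero, nsmul_eq_mul]
    have rhs : (∑ Om' : AddChar F ℂ, ∑ β : F, lam β * (Om' (Lg β))⁻¹) =
        ((q : ℂ) ^ m) * (∑ x : KM, lam (x : F)) := by
      rw [Finset.sum_comm]
      have : ∀ β : F, (∑ Om' : AddChar F ℂ, lam β * (Om' (Lg β))⁻¹) =
          (if Lg β = 0 then lam β else 0) * ((q : ℂ) ^ m) := by
        intro β
        rw [← Finset.mul_sum, hsum2]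
        by_cases hβ : Lg β = 0
        · rw [if_pos hβ, if_pos hβ]
        · rw [if_neg hβ, if_neg hβ, mul_zero, zero_mul]
      rw [Finset.sum_congr rfl fun β _ => this β, ← Finset.sum_mul, hcollapse, mul_comm]
    rw [← lhs, rhs]
  have hqm0 : ((q : ℂ) ^ m) ≠ 0 := by
    apply pow_ne_zero
    exact_mod_cast (by omega : q ≠ 0)
  have hNval : (N : ℂ) = if (∀ x : F, Lg x = 0 → lam x = 1) then ((q : ℂ) ^ k) else 0 := by
    have hkey := key
    rw [mul_comm (N : ℂ)] at hkey
    have hNS := mul_left_cancel₀ hqm0 hkey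
    rw [hNS, hψKsum]
  constructor
  · exact part1 Om
  · rw [hNcard]
    by_cases hc : ∀ β : F, lam (Lg' β) = 1
    · rw [if_pos hc]
      have := hNval
      rw [if_pos (hiff.mp hc)] at this
      exact_mod_cast this
    · rw [if_neg hc]
      have := hNval
      rw [if_neg (fun h => hc (hiff.mpr h))] at this
      exact_mod_cast this
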